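/- Let p ≥ 1, let γ = (γ₁, …, γ_d) be a composition of p with part function φ : {1, …, p} → {1, …, d}, let ℓ₁ ≥ … ≥ ℓ_p > 0 be real numbers, and let λ̂_k = (1/γ_k)·Σ_{j : φ(j) = k} ℓ_j > 0 be the block averages. Let V be a real orthogonal p×p matrix, let S = V · diag(ℓ₁, …, ℓ_p) · Vᵀ and Σ̂ = V · diag(λ̂_{φ(1)}, …, λ̂_{φ(p)}) · Vᵀ. Then Σ̂ is invertible and Real.log (det Σ̂) + trace(Σ̂⁻¹ · S) = Σ_{k=1}^d γ_k · Real.log λ̂_k + p. -/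

import Mathlib

open Matrix Finset

theorem psa_max_loglikelihood_identity (p d : ℕ) (hp : 1 ≤ p)
    (φ : Fin p → Fin d) (hφmono : Monotone φ) (hφsurj : Function.Surjective φ)
    (ℓ : Fin p → ℝ) (hℓdec : ∀ j k : Fin p, j ≤ k → ℓ k ≤ ℓ j) (hℓpos : ∀ j, 0 < ℓ j)
    (γ : Fin d → ℕ) (hγ : γ = fun k => (Finset.univ.filter (fun j => φ j = k)).card)
    (lamhat : Fin d → ℝ)
    (hlamhat : lamhat = fun k => (∑ j ∈ Finset.univ.filter (fun j => φ j = k), ℓ j) / γ k)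
    (V : Matrix (Fin p) (Fin p) ℝ) (hV : Vᵀ * V = 1)
    (S Sighat : Matrix (Fin p) (Fin p) ℝ)
    (hS : S = V * Matrix.diagonal ℓ * Vᵀ)
    (hSighat : Sighat = V * Matrix.diagonal (fun j => lamhat (φ j)) * Vᵀ) :
    IsUnit Sighat.det ∧
      Real.log Sighat.det + Matrix.trace (Sighat⁻¹ * S)
        = ∑ k, (γ k : ℝ) * Real.log (lamhat k) + p := by
  have hVV' : V * Vᵀ = 1 := mul_eq_one_comm.mp hV
  -- fibers nonempty, γ positive
  have hγpos : ∀ k, 0 < γ k := by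
    intro k
    obtain ⟨j, hj⟩ := hφsurj k
    rw [hγ]
    exact Finset.card_pos.mpr ⟨j, by simp [hj]⟩
  have hlampos : ∀ k, 0 < lamhat k := by
    intro k
    rw [hlamhat]
    apply div_pos
    · apply Finset.sum_pos
      · intro j _; exact hℓpos j
      · obtain ⟨j, hj⟩ := hφsurj k
        exact ⟨j, by simp [hj]⟩
    · exact_mod_cast hγpos k
  have hsumfib : ∀ k, ∑ j ∈ Finset.univ.filter (fun j => φ j = k), ℓ j
      = (γ k : ℝ) * lamhat k := by
    intro k
    have h0 : ((γ k : ℕ) : ℝ) ≠ 0 := by exact_mod_cast (hγpos k).ne'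
    rw [hlamhat]
    field_simp
  -- determinant
  have hdet : Sighat.det = ∏ j, lamhat (φ j) := by
    rw [hSighat, Matrix.det_mul, Matrix.det_mul, Matrix.det_diagonal]
    rw [mul_comm V.det, mul_assoc, ← Matrix.det_mul, hVV', Matrix.det_one, mul_one]
  have hdetpos : 0 < Sighat.det := by
    rw [hdet]
    exact Finset.prod_pos fun j _ => hlampos (φ j)
  refine ⟨isUnit_iff_ne_zero.mpr (ne_of_gt hdetpos), ?_⟩
  -- inverse
  have hinv : Sighat⁻¹ = V * Matrix.diagonal (fun j => (lamhat (φ j))⁻¹) * Vᵀ := by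
    apply Matrix.inv_eq_right_inv
    rw [hSighat]
    calc V * Matrix.diagonal (fun j => lamhat (φ j)) * Vᵀ *
          (V * Matrix.diagonal (fun j => (lamhat (φ j))⁻¹) * Vᵀ)
        = V * Matrix.diagonal (fun j => lamhat (φ j)) * (Vᵀ * V) *
          Matrix.diagonal (fun j => (lamhat (φ j))⁻¹) * Vᵀ := by
          simp only [Matrix.mul_assoc]
      _ = V * (Matrix.diagonal (fun j => lamhat (φ j)) *
          Matrix.diagonal (fun j => (lamhat (φ j))⁻¹)) * Vᵀ := by
          rw [hV]; simp [Matrix.mul_assoc]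
      _ = 1 := by
          rw [Matrix.diagonal_mul_diagonal]
          have : (fun j => lamhat (φ j) * (lamhat (φ j))⁻¹) = fun _ => (1:ℝ) := by
            funext j; exact mul_inv_cancel₀ (ne_of_gt (hlampos (φ j)))
          rw [this, Matrix.diagonal_one, Matrix.mul_one, hVV']
  -- trace
  have htr : Matrix.trace (Sighat⁻¹ * S) = ∑ j, (lamhat (φ j))⁻¹ * ℓ j := by
    rw [hinv, hS]
    have : V * Matrix.diagonal (fun j => (lamhat (φ j))⁻¹) * Vᵀ *
        (V * Matrix.diagonal ℓ * Vᵀ)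
        = V * (Matrix.diagonal (fun j => (lamhat (φ j))⁻¹) * Matrix.diagonal ℓ) * Vᵀ := by
      calc V * Matrix.diagonal (fun j => (lamhat (φ j))⁻¹) * Vᵀ *
            (V * Matrix.diagonal ℓ * Vᵀ)
          = V * Matrix.diagonal (fun j => (lamhat (φ j))⁻¹) * (Vᵀ * V) *
            Matrix.diagonal ℓ * Vᵀ := by simp only [Matrix.mul_assoc]
        _ = _ := by rw [hV]; simp [Matrix.mul_assoc]
    rw [this, Matrix.trace_mul_comm, ← Matrix.mul_assoc, hV, Matrix.one_mul,
      Matrix.diagonal_mul_diagonal, Matrix.trace_diagonal]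
  -- sum over fibers
  have hfib : ∀ f : Fin p → ℝ, ∑ j, f j
      = ∑ k, ∑ j ∈ Finset.univ.filter (fun j => φ j = k), f j := by
    intro f
    exact (Finset.sum_fiberwise_of_maps_to (fun j _ => Finset.mem_univ (φ j)) f).symm
  have htrval : Matrix.trace (Sighat⁻¹ * S) = (p : ℝ) := by
    rw [htr, hfib (fun j => (lamhat (φ j))⁻¹ * ℓ j)]
    have : ∀ k, ∑ j ∈ Finset.univ.filter (fun j => φ j = k), (lamhat (φ j))⁻¹ * ℓ j
        = (γ k : ℝ) := by
      intro k
      have h1 : ∑ j ∈ Finset.univ.filter (fun j => φ j = k), (lamhat (φ j))⁻¹ * ℓ j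
          = (lamhat k)⁻¹ * ∑ j ∈ Finset.univ.filter (fun j => φ j = k), ℓ j := by
        rw [Finset.mul_sum]
        apply Finset.sum_congr rfl
        intro j hj
        rw [Finset.mem_filter] at hj
        rw [hj.2]
      rw [h1, hsumfib k, mul_comm ((γ k : ℝ)), ← mul_assoc,
        inv_mul_cancel₀ (ne_of_gt (hlampos k)), one_mul]
    rw [Finset.sum_congr rfl (fun k _ => this k)]
    have : ∑ k, (γ k : ℝ) = ((∑ k, γ k : ℕ) : ℝ) := by push_cast; ring
    rw [this]
    congr 1
    rw [hγ]
    simpa using (Finset.card_eq_sum_card_fiberwise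
      (f := φ) (s := Finset.univ) (t := Finset.univ) (fun j _ => Finset.mem_univ (φ j))).symm
  have hlog : Real.log Sighat.det = ∑ k, (γ k : ℝ) * Real.log (lamhat k) := by
    rw [hdet, Real.log_prod (fun j _ => ne_of_gt (hlampos (φ j)))]
    rw [hfib (fun j => Real.log (lamhat (φ j)))]
    apply Finset.sum_congr rfl
    intro k _
    have hcst : ∀ j ∈ Finset.univ.filter (fun j => φ j = k),
        Real.log (lamhat (φ j)) = Real.log (lamhat k) := by
      intro j hj
      rw [(Finset.mem_filter.mp hj).2]
    rw [Finset.sum_congr rfl hcst, Finset.sum_const, nsmul_eq_mul, hγ]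
  rw [htrval, hlog]
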